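/- For any bounded operator X on a complex Hilbert space, the Aluthge transform satisfies ‖X̃‖ ≤ ‖X²‖^{1/2}, where X̃ = |X|^{1/2} V |X|^{1/2} with X = V|X| the polar decomposition. -/

import Mathlib

set_option synthInstance.maxHeartbeats 1000000
set_option maxHeartbeats 1000000

open scoped InnerProductSpace NNReal ENNReal

/-- Numerical radius of a bounded operator on a complex Hilbert space. -/
noncomputable def numRad {H : Type*} [NormedAddCommGroup H] [InnerProductSpace ℂ H]
    (T : H →L[ℂ] H) : ℝ :=
  ⨆ z : {z : H // ‖z‖ = 1}, ‖(⟪T z.1, z.1⟫_ℂ : ℂ)‖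

/-- Crawford number. -/
noncomputable def crawford {H : Type*} [NormedAddCommGroup H] [InnerProductSpace ℂ H]
    (T : H →L[ℂ] H) : ℝ :=
  ⨅ z : {z : H // ‖z‖ = 1}, ‖(⟪T z.1, z.1⟫_ℂ : ℂ)‖

/-- The 2×2 block operator matrix `[[A, B], [C, D]]` acting on `H ⊕ H`
(the ℓ² direct sum `WithLp 2 (H × H)`), sending `(x, y)` to `(Ax + By, Cx + Dy)`. -/
noncomputable def blk {H : Type*} [NormedAddCommGroup H] [InnerProductSpace ℂ H]
    (A B C D : H →L[ℂ] H) : WithLp 2 (H × H) →L[ℂ] WithLp 2 (H × H) :=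
  (((WithLp.prodContinuousLinearEquiv 2 ℂ H H).symm.toContinuousLinearMap).comp
    (((A.comp (ContinuousLinearMap.fst ℂ H H) + B.comp (ContinuousLinearMap.snd ℂ H H)).prod
      (C.comp (ContinuousLinearMap.fst ℂ H H) + D.comp (ContinuousLinearMap.snd ℂ H H))))).comp
    ((WithLp.prodContinuousLinearEquiv 2 ℂ H H).toContinuousLinearMap)

section Aux
variable {A : Type*} [CStarAlgebra A]

lemma my_spectralRadius_mul_comm (a b : A) :
    spectralRadius ℂ (a * b) = spectralRadius ℂ (b * a) := by
  have key : ∀ x y : A, spectralRadius ℂ (x * y) ≤ spectralRadius ℂ (y * x) := fun x y => by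
    rw [spectralRadius, spectralRadius]
    refine iSup₂_le fun k hk => ?_
    rcases eq_or_ne k 0 with rfl | h
    · simp
    · have hu : k ∈ spectrum ℂ (y * x) := by
        have := spectrum.unit_mem_mul_comm
          (a := x) (b := y) (r := Units.mk0 k h)
        simpa using this.mp (by simpa using hk)
      exact le_iSup₂ (f := fun k (_ : k ∈ spectrum ℂ (y * x)) => (‖k‖₊ : ℝ≥0∞)) k hu
  exact le_antisymm (key a b) (key b a)

variable [PartialOrder A] [StarOrderedRing A]

lemma my_heinz_half [Nontrivial A] (a r : A) (hr : 0 ≤ r) :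
    ‖CFC.sqrt r * a * CFC.sqrt r‖ ^ 2 ≤ ‖a‖ * ‖r * a * r‖ := by
  set p := CFC.sqrt r with hp
  have hpsa : IsSelfAdjoint p := IsSelfAdjoint.of_nonneg (CFC.sqrt_nonneg _)
  have hpp : p * p = r := CFC.sqrt_mul_sqrt_self r hr
  set d := star a * r * a with hd
  have hdnn : (0 : A) ≤ d := star_left_conjugate_nonneg hr a
  have hdsa : IsSelfAdjoint d := IsSelfAdjoint.of_nonneg hdnn
  have h1 : ‖p * a * p‖ ^ 2 = ‖p * d * p‖ := by
    have e : star (p * a * p) * (p * a * p) = p * d * p := by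
      simp only [star_mul, hpsa.star_eq, hd, ← hpp]
      noncomm_ring
    rw [sq, ← CStarRing.norm_star_mul_self, e]
  have hsa2 : IsSelfAdjoint (p * d * p) := by
    rw [IsSelfAdjoint, star_mul, star_mul, hpsa.star_eq, hdsa.star_eq]
    rw [hd]
    noncomm_ring
  have h2 : ‖p * d * p‖ ≤ ‖d * r‖ := by
    have e1 : (spectralRadius ℂ (p * d * p)).toReal = ‖p * d * p‖ :=
      hsa2.toReal_spectralRadius_complex_eq_norm
    have e2 : spectralRadius ℂ (p * d * p) = spectralRadius ℂ (d * r) := by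
      rw [mul_assoc, my_spectralRadius_mul_comm p (d * p), mul_assoc, hpp]
    have e3 : spectralRadius ℂ (d * r) ≤ (‖d * r‖₊ : ℝ≥0∞) :=
      spectrum.spectralRadius_le_nnnorm (𝕜 := ℂ) _
    calc ‖p * d * p‖ = (spectralRadius ℂ (d * r)).toReal := by rw [← e1, e2]
      _ ≤ ((‖d * r‖₊ : ℝ≥0∞)).toReal := ENNReal.toReal_mono (by simp) e3
      _ = ‖d * r‖ := by simp
  have h3 : ‖d * r‖ ≤ ‖a‖ * ‖r * a * r‖ := by
    have e : d * r = star a * (r * a * r) := by rw [hd]; noncomm_ring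
    calc ‖d * r‖ = ‖star a * (r * a * r)‖ := by rw [e]
      _ ≤ ‖star a‖ * ‖r * a * r‖ := norm_mul_le _ _
      _ = ‖a‖ * ‖r * a * r‖ := by rw [norm_star]
  calc ‖p * a * p‖ ^ 2 = ‖p * d * p‖ := h1
    _ ≤ ‖d * r‖ := h2
    _ ≤ ‖a‖ * ‖r * a * r‖ := h3

end Aux

theorem norm_aluthge_le_sqrt_norm_sq {H : Type*} [NormedAddCommGroup H]
    [InnerProductSpace ℂ H] [CompleteSpace H] (X V : H →L[ℂ] H)
    (hV : X = V * CFC.sqrt (star X * X))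
    (hV' : star V * X = CFC.sqrt (star X * X)) :
    ‖CFC.sqrt (CFC.sqrt (star X * X)) * V * CFC.sqrt (CFC.sqrt (star X * X))‖ ≤
      Real.sqrt ‖X * X‖ := by
  clear hV'
  obtain hH | hH := subsingleton_or_nontrivial H
  · haveI : Subsingleton (H →L[ℂ] H) :=
      ⟨fun f g => ContinuousLinearMap.ext fun x => Subsingleton.elim _ _⟩
    rw [Subsingleton.elim
      (CFC.sqrt (CFC.sqrt (star X * X)) * V * CFC.sqrt (CFC.sqrt (star X * X)))
      (0 : H →L[ℂ] H), norm_zero]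
    positivity
  haveI : Nontrivial (H →L[ℂ] H) := by
    obtain ⟨x, hx⟩ := exists_ne (0 : H)
    exact ⟨0, 1, fun h => hx (by simpa using (DFunLike.congr_fun h x).symm)⟩
  have hXX : (0 : H →L[ℂ] H) ≤ star X * X := star_mul_self_nonneg X
  set R : H →L[ℂ] H := CFC.sqrt (star X * X) with hRdef
  have hR : (0 : H →L[ℂ] H) ≤ R := CFC.sqrt_nonneg _
  have hRsa : IsSelfAdjoint R := .of_nonneg hR
  have hRR : R * R = star X * X := CFC.sqrt_mul_sqrt_self _ hXX
  have hspec : ∀ t ∈ spectrum ℝ R, (0:ℝ) ≤ t := fun t ht =>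
    spectrum_nonneg_of_nonneg hR ht
  set P : H →L[ℂ] H := CFC.sqrt R with hPdef
  have hPc : P = cfc Real.sqrt R := by
    refine CFC.sqrt_unique ?_ (cfc_nonneg fun t _ => Real.sqrt_nonneg t)
    calc cfc Real.sqrt R * cfc Real.sqrt R
        = cfc (fun t : ℝ => Real.sqrt t * Real.sqrt t) R := (cfc_mul _ _ R).symm
      _ = cfc (fun t : ℝ => t) R := cfc_congr fun t ht => Real.mul_self_sqrt (hspec t ht)
      _ = R := cfc_id' ℝ R
  -- Step A : ‖R * X‖ = ‖X * X‖
  have hRX : ‖R * X‖ = ‖X * X‖ := by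
    have e : star (R * X) * (R * X) = star (X * X) * (X * X) := by
      simp only [star_mul, hRsa.star_eq]
      calc star X * R * (R * X) = star X * (R * R) * X := by noncomm_ring
        _ = star X * (star X * X) * X := by rw [hRR]
        _ = star X * star X * (X * X) := by noncomm_ring
    have h1 : ‖R * X‖ * ‖R * X‖ = ‖X * X‖ * ‖X * X‖ := by
      rw [← CStarRing.norm_star_mul_self, e, CStarRing.norm_star_mul_self]
    exact (mul_self_inj (norm_nonneg _) (norm_nonneg _)).mp h1
  -- ε-approximation
  refine le_of_forall_pos_le_add fun δ hδ => ?_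
  set C : ℝ := ‖P‖ * ‖V‖ + 1 with hCdef
  have hC : (0:ℝ) < C := by positivity
  set ε : ℝ := (δ / C) ^ 2 with hεdef
  have hε : (0:ℝ) < ε := by positivity
  have hsqε : Real.sqrt ε = δ / C := Real.sqrt_sq (by positivity)
  have hcont : ContinuousOn (fun t : ℝ => (t + ε)⁻¹) (spectrum ℝ R) :=
    ContinuousOn.inv₀ (by fun_prop) fun t ht => by
      have := hspec t ht; positivity
  have hcont1 : ContinuousOn (fun t : ℝ => t * (t + ε)⁻¹) (spectrum ℝ R) :=
    (continuous_id.continuousOn).mul hcont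
  have hcont2 : ContinuousOn (fun t : ℝ => (t + ε)⁻¹ * t) (spectrum ℝ R) :=
    hcont.mul (continuous_id.continuousOn)
  have hcont3 : ContinuousOn (fun t : ℝ => t * (t + ε)⁻¹ * Real.sqrt t) (spectrum ℝ R) :=
    hcont1.mul (Real.continuous_sqrt.continuousOn)
  set c : H →L[ℂ] H := cfc (fun t : ℝ => (t + ε)⁻¹) R with hcdef
  have hcsa : IsSelfAdjoint c := cfc_predicate _ R
  have hidR : cfc (fun t : ℝ => t) R = R := cfc_id' ℝ R
  have hcR : c * R = cfc (fun t : ℝ => (t + ε)⁻¹ * t) R := by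
    calc c * R = cfc (fun t : ℝ => (t + ε)⁻¹) R * cfc (fun t : ℝ => t) R := by
          rw [hidR, hcdef]
      _ = cfc (fun t : ℝ => (t + ε)⁻¹ * t) R := (cfc_mul _ _ R hcont (by fun_prop)).symm
  have hRc : R * c = cfc (fun t : ℝ => t * (t + ε)⁻¹) R := by
    calc R * c = cfc (fun t : ℝ => t) R * cfc (fun t : ℝ => (t + ε)⁻¹) R := by
          rw [hidR, hcdef]
      _ = cfc (fun t : ℝ => t * (t + ε)⁻¹) R := (cfc_mul _ _ R (by fun_prop) hcont).symm
  -- ‖X * c‖ ≤ 1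
  have hstar : star (X * c) * (X * c)
      = cfc (fun t : ℝ => ((t + ε)⁻¹ * t) * (t * (t + ε)⁻¹)) R := by
    calc star (X * c) * (X * c) = c * (star X * X) * c := by
          rw [star_mul, hcsa.star_eq]; noncomm_ring
      _ = (c * R) * (R * c) := by rw [← hRR]; noncomm_ring
      _ = cfc (fun t : ℝ => ((t + ε)⁻¹ * t) * (t * (t + ε)⁻¹)) R := by
          rw [hcR, hRc]; exact (cfc_mul _ _ R hcont2 hcont1).symm
  have hXc : ‖X * c‖ ≤ 1 := by
    have hsq : ‖X * c‖ * ‖X * c‖ ≤ 1 := by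
      rw [← CStarRing.norm_star_mul_self, hstar]
      refine norm_cfc_le zero_le_one fun t ht => ?_
      have h0 := hspec t ht
      have h1 : (0:ℝ) < t + ε := by positivity
      have e : ((t + ε)⁻¹ * t) * (t * (t + ε)⁻¹) = (t / (t + ε)) ^ 2 := by
        field_simp
      have h2 : t / (t + ε) ≤ 1 := by rw [div_le_one h1]; linarith
      have h3 : (0:ℝ) ≤ t / (t + ε) := div_nonneg h0 h1.le
      rw [Real.norm_eq_abs, e, abs_of_nonneg (by positivity), sq]
      nlinarith
    nlinarith [norm_nonneg (X * c)]
  -- ‖R * (X * c) * R‖ ≤ ‖X * X‖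
  have hg1 : ‖cfc (fun t : ℝ => (t + ε)⁻¹ * t) R‖ ≤ 1 := by
    refine norm_cfc_le zero_le_one fun t ht => ?_
    have h0 := hspec t ht
    have h1 : (0:ℝ) < t + ε := by positivity
    have e : (t + ε)⁻¹ * t = t / (t + ε) := by ring
    rw [Real.norm_eq_abs, e, abs_of_nonneg (div_nonneg h0 h1.le), div_le_one h1]
    linarith
  have hRaR : ‖R * (X * c) * R‖ ≤ ‖X * X‖ := by
    have e : R * (X * c) * R = (R * X) * (c * R) := by noncomm_ring
    rw [e, hcR]
    calc ‖(R * X) * cfc (fun t : ℝ => (t + ε)⁻¹ * t) R‖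
        ≤ ‖R * X‖ * ‖cfc (fun t : ℝ => (t + ε)⁻¹ * t) R‖ := norm_mul_le _ _
      _ ≤ ‖R * X‖ * 1 := mul_le_mul_of_nonneg_left hg1 (norm_nonneg _)
      _ = ‖X * X‖ := by rw [mul_one, hRX]
  -- the difference bound
  have hXc_eq : X * c = V * cfc (fun t : ℝ => t * (t + ε)⁻¹) R := by
    calc X * c = V * (R * c) := by rw [hV]; noncomm_ring
      _ = V * cfc (fun t : ℝ => t * (t + ε)⁻¹) R := by rw [hRc]
  have e1 : cfc (fun t : ℝ => t * (t + ε)⁻¹) R * P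
      = cfc (fun t : ℝ => t * (t + ε)⁻¹ * Real.sqrt t) R := by
    rw [hPc]
    exact (cfc_mul _ _ R hcont1 (by fun_prop)).symm
  have e2 : cfc (fun t : ℝ => Real.sqrt t - t * (t + ε)⁻¹ * Real.sqrt t) R
      = P - cfc (fun t : ℝ => t * (t + ε)⁻¹ * Real.sqrt t) R := by
    rw [cfc_sub _ _ R (by fun_prop) hcont3, hPc]
  have hPV : P * V * P - P * (X * c) * P
      = (P * V) * cfc (fun t : ℝ => Real.sqrt t - t * (t + ε)⁻¹ * Real.sqrt t) R := by
    rw [hXc_eq, e2]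
    calc P * V * P - P * (V * cfc (fun t : ℝ => t * (t + ε)⁻¹) R) * P
        = (P * V) * P - (P * V) * (cfc (fun t : ℝ => t * (t + ε)⁻¹) R * P) := by
          noncomm_ring
      _ = (P * V) * (P - cfc (fun t : ℝ => t * (t + ε)⁻¹) R * P) := by rw [mul_sub]
      _ = (P * V) * (P - cfc (fun t : ℝ => t * (t + ε)⁻¹ * Real.sqrt t) R) := by rw [e1]
  have hdiff : ‖P * V * P - P * (X * c) * P‖ ≤ (‖P‖ * ‖V‖) * (δ / C) := by
    rw [hPV]
    have hb : ‖cfc (fun t : ℝ => Real.sqrt t - t * (t + ε)⁻¹ * Real.sqrt t) R‖ ≤ δ / C := by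
      rw [← hsqε]
      refine norm_cfc_le (Real.sqrt_nonneg _) fun t ht => ?_
      have h0 := hspec t ht
      have h1 : (0:ℝ) < t + ε := by positivity
      have e : Real.sqrt t - t * (t + ε)⁻¹ * Real.sqrt t = Real.sqrt t * ε / (t + ε) := by
        field_simp
        ring
      rw [Real.norm_eq_abs, e,
        abs_of_nonneg (div_nonneg (mul_nonneg (Real.sqrt_nonneg t) hε.le) h1.le),
        div_le_iff₀ h1]
      nlinarith [Real.sq_sqrt h0, Real.sq_sqrt hε.le, Real.sqrt_nonneg t, Real.sqrt_nonneg ε,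
        mul_nonneg (Real.sqrt_nonneg ε) (sq_nonneg (Real.sqrt t - Real.sqrt ε)),
        mul_nonneg (Real.sqrt_nonneg t) hε.le]
    calc ‖(P * V) * cfc (fun t : ℝ => Real.sqrt t - t * (t + ε)⁻¹ * Real.sqrt t) R‖
        ≤ ‖P * V‖ * ‖cfc (fun t : ℝ => Real.sqrt t - t * (t + ε)⁻¹ * Real.sqrt t) R‖ :=
          norm_mul_le _ _
      _ ≤ (‖P‖ * ‖V‖) * (δ / C) :=
          mul_le_mul (norm_mul_le _ _) hb (norm_nonneg _) (by positivity)
  -- Heinz for the approximant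
  have hheinz : ‖P * (X * c) * P‖ ^ 2 ≤ ‖X * c‖ * ‖R * (X * c) * R‖ :=
    my_heinz_half (X * c) R hR
  have h5 : ‖P * (X * c) * P‖ ≤ Real.sqrt ‖X * X‖ := by
    have h6 : ‖P * (X * c) * P‖ ^ 2 ≤ ‖X * X‖ := by
      refine hheinz.trans ?_
      calc ‖X * c‖ * ‖R * (X * c) * R‖ ≤ 1 * ‖X * X‖ :=
            mul_le_mul hXc hRaR (norm_nonneg _) zero_le_one
        _ = ‖X * X‖ := one_mul _
    nlinarith [Real.sq_sqrt (norm_nonneg (X * X)), Real.sqrt_nonneg ‖X * X‖,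
      norm_nonneg (P * (X * c) * P)]
  calc ‖P * V * P‖ = ‖P * (X * c) * P + (P * V * P - P * (X * c) * P)‖ := by
        rw [show P * (X * c) * P + (P * V * P - P * (X * c) * P) = P * V * P from by abel]
    _ ≤ ‖P * (X * c) * P‖ + ‖P * V * P - P * (X * c) * P‖ := norm_add_le _ _
    _ ≤ Real.sqrt ‖X * X‖ + (‖P‖ * ‖V‖) * (δ / C) := add_le_add h5 hdiff
    _ ≤ Real.sqrt ‖X * X‖ + δ := by
        have h7 : ‖P‖ * ‖V‖ ≤ C := by rw [hCdef]; linarith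
        have h8 : (‖P‖ * ‖V‖) * (δ / C) ≤ C * (δ / C) :=
          mul_le_mul_of_nonneg_right h7 (by positivity)
        have h9 : C * (δ / C) = δ := by field_simp
        linarith
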